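/- For n = 2m+1 odd, det H_n(a,b) = (-1)^{m+1} ∏_{k=0}^{m} (2k+1+a)(2k+1+b). -/

import Mathlib

/-- The `(n+1) × (n+1)` matrix `H_n(a,b)`: tridiagonal with zero diagonal,
superdiagonal entries `h_{k,k+1} = k` (`k` even) or `k + a` (`k` odd), and
subdiagonal entries `h_{n+2-k,n+1-k} = k` (`k` even) or `k + b` (`k` odd),
for `k = 1, ..., n` (1-based indexing). -/
def Hmat (n : ℕ) (a b : ℝ) : Matrix (Fin (n + 1)) (Fin (n + 1)) ℝ :=
  Matrix.of fun i j =>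
    if (i : ℕ) + 1 = (j : ℕ) then
      (if ((i : ℕ) + 1) % 2 = 0 then ((i : ℕ) + 1 : ℝ) else ((i : ℕ) + 1 : ℝ) + a)
    else if (j : ℕ) + 1 = (i : ℕ) then
      (if (n - (j : ℕ)) % 2 = 0 then ((n - (j : ℕ) : ℕ) : ℝ)
       else ((n - (j : ℕ) : ℕ) : ℝ) + b)
    else 0

/-- General tridiagonal matrix with zero diagonal, superdiagonal `u` and
subdiagonal `v`. -/
def Tmat (N : ℕ) (u v : ℕ → ℝ) : Matrix (Fin N) (Fin N) ℝ :=
  Matrix.of fun i j => if (i : ℕ) + 1 = (j : ℕ) then u i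
    else if (j : ℕ) + 1 = (i : ℕ) then v j else 0

/-- Determinant of an even-sized tridiagonal matrix with zero diagonal. -/
lemma detTmat (n : ℕ) (u v : ℕ → ℝ) :
    (Tmat (2*n+2) u v).det
      = (-1)^(n+1) * ∏ k ∈ Finset.range (n+1), u (2*k) * v (2*k) := by
  induction n generalizing u v with
  | zero =>
      show (Tmat 2 u v).det = _
      rw [Matrix.det_fin_two]
      simp [Tmat]
  | succ n ih =>
      have hsA : ∀ i : Fin (2*n+3), (((1 : Fin (2*n+4)).succAbove i) : ℕ)
          = if (i:ℕ) < 1 then (i:ℕ) else (i:ℕ)+1 := by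
        intro i
        by_cases h : (i:ℕ) < 1
        · rw [Fin.succAbove_of_castSucc_lt _ _ (by show (i:ℕ) < ((1 : Fin (2*n+4)) : ℕ); rw [show ((1 : Fin (2*n+4)) : ℕ) = 1 from rfl]; omega)]
          simp [h]
        · rw [Fin.succAbove_of_le_castSucc _ _ (by simp [Fin.le_def]; omega)]
          simp [h]
      have hr0 : (((1 : Fin (2*n+4)).succAbove 0) : ℕ) = 0 := by rw [hsA]; simp
      have hrs : ∀ i : Fin (2*n+2), (((1 : Fin (2*n+4)).succAbove i.succ) : ℕ) = (i:ℕ)+2 := by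
        intro i; rw [hsA]; simp
      show (Tmat (2*n+4) u v).det = _
      rw [Matrix.det_succ_column_zero]
      rw [Finset.sum_eq_single (1 : Fin (2*n+4))]
      · have e1 : (Tmat (2*n+4) u v) 1 0 = v 0 := by
          simp only [Tmat, Matrix.of_apply, Fin.val_zero, Fin.val_one]
          norm_num
        rw [e1]
        have e2 : ((Tmat (2*n+4) u v).submatrix (Fin.succAbove 1) Fin.succ).det
            = u 0 * (Tmat (2*n+2) (fun k => u (k+2)) (fun k => v (k+2))).det := by
          rw [Matrix.det_succ_row_zero]
          rw [Finset.sum_eq_single (0 : Fin (2*n+3))]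
          · have e3 : ((Tmat (2*n+4) u v).submatrix (Fin.succAbove 1) Fin.succ) 0 0 = u 0 := by
              simp only [Matrix.submatrix_apply, Tmat, Matrix.of_apply, hr0, Fin.val_succ,
                Fin.val_zero]
              norm_num
            rw [e3]
            have e4 : ((Tmat (2*n+4) u v).submatrix (Fin.succAbove 1) Fin.succ).submatrix
                  Fin.succ (Fin.succAbove 0)
                = Tmat (2*n+2) (fun k => u (k+2)) (fun k => v (k+2)) := by
              ext i j
              simp only [Matrix.submatrix_apply, Fin.succAbove_zero, Tmat, Matrix.of_apply, hrs,
                Fin.val_succ]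
              split_ifs <;> first | rfl | (exfalso; omega)
            rw [e4]
            simp
          · intro j _ hj
            have hj' : (j:ℕ) ≠ 0 := fun h => hj (Fin.ext h)
            have : ((Tmat (2*n+4) u v).submatrix (Fin.succAbove 1) Fin.succ) 0 j = 0 := by
              simp only [Matrix.submatrix_apply, Tmat, Matrix.of_apply, hr0, Fin.val_succ]
              rw [if_neg (by omega), if_neg (by omega)]
            rw [this]; ring
          · simp
        rw [e2, ih]
        rw [Finset.prod_range_succ' (fun k => u (2*k) * v (2*k)) (n+1)]
        have hprod : ∏ k ∈ Finset.range (n+1), u (2*(k+1)) * v (2*(k+1))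
            = ∏ k ∈ Finset.range (n+1), u (2*k+2) * v (2*k+2) :=
          Finset.prod_congr rfl fun k _ => by rw [show 2*(k+1) = 2*k+2 by ring]
        rw [hprod]
        have h1 : ((1 : Fin (2*n+4)) : ℕ) = 1 := rfl
        rw [h1]
        ring
      · intro i _ hi
        have h1 : (i:ℕ) ≠ 1 := fun h => hi (Fin.ext h)
        have : (Tmat (2*n+4) u v) i 0 = 0 := by
          simp only [Tmat, Matrix.of_apply, Fin.val_zero]
          split_ifs <;> simp_all
        rw [this]; ring
      · simp

/-- for `n = 2m+1` odd,
`det H_n(a,b) = (-1)^(m+1) ∏_{k=0}^m (2k+1+a)(2k+1+b)`. -/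
theorem Hmat_odd_det (m : ℕ) (a b : ℝ) :
    (Hmat (2 * m + 1) a b).det
      = (-1 : ℝ) ^ (m + 1)
          * ∏ k ∈ Finset.range (m + 1),
              (2 * (k : ℝ) + 1 + a) * (2 * (k : ℝ) + 1 + b) := by
  have heq : (Hmat (2*m+1) a b).det
      = (Tmat (2*m+2) (fun k => if (k+1) % 2 = 0 then ((k:ℝ)+1) else ((k:ℝ)+1)+a)
          (fun k => if (2*m+1-k) % 2 = 0 then ((2*m+1-k : ℕ):ℝ)
            else ((2*m+1-k : ℕ):ℝ)+b)).det := rfl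
  rw [heq, detTmat]
  congr 1
  have hL : (∏ k ∈ Finset.range (m+1),
        (fun k : ℕ => if (k+1) % 2 = 0 then ((k:ℝ)+1) else ((k:ℝ)+1)+a) (2*k)
          * (fun k : ℕ => if (2*m+1-k) % 2 = 0 then ((2*m+1-k : ℕ):ℝ)
              else ((2*m+1-k : ℕ):ℝ)+b) (2*k))
      = ∏ k ∈ Finset.range (m+1), (2*(k:ℝ)+1+a) * (2*((m-k : ℕ):ℝ)+1+b) := by
    apply Finset.prod_congr rfl
    intro k hk
    have hk' : k ≤ m := by have := Finset.mem_range.mp hk; omega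
    simp only []
    rw [if_neg (by omega), if_neg (by omega)]
    have h3 : (2*m+1-2*k : ℕ) = 2*(m-k)+1 := by omega
    rw [h3]
    push_cast
    ring
  rw [hL]
  have hB : ∏ k ∈ Finset.range (m+1), (2*((m-k : ℕ):ℝ)+1+b)
      = ∏ k ∈ Finset.range (m+1), (2*(k:ℝ)+1+b) := by
    rw [← Finset.prod_range_reflect (fun j => 2*(j:ℝ)+1+b) (m+1)]
    apply Finset.prod_congr rfl
    intro k hk
    have : m - k = m + 1 - 1 - k := by omega
    rw [this]
  rw [Finset.prod_mul_distrib, Finset.prod_mul_distrib, hB]
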